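/- Fix integers s ≥ 2 and p ≥ 1. There exists a constant C > 0 such that for every integer m ≥ 1, |R_{s,p}(m)·ζ_c^m·m^{3/2} − A_{s,p}| ≤ C/m, where A_{s,p} = p·M^p/√(2π·s·(s-1)). In particular R_{s,p}(m) = A_{s,p}·ζ_c^{-m}·m^{-3/2}·(1 + O(1/m)) as m → ∞. -/

import Mathlib

/-- Raney number `R_{s,p}(n) = (p/(s·n+p))·C(s·n+p, n)` as a real number. -/
noncomputable def raney (s p n : ℕ) : ℝ :=
  (p : ℝ) / (s * n + p) * (Nat.choose (s * n + p) n : ℝ)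

/-- The analytic threshold `ζ_c = (s-1)^{s-1}/s^s`. -/
noncomputable def zetaC (s : ℕ) : ℝ := ((s : ℝ) - 1) ^ (s - 1) / (s : ℝ) ^ s

/-- `M = s/(s-1)`. -/
noncomputable def Mconst (s : ℕ) : ℝ := (s : ℝ) / ((s : ℝ) - 1)

/-- The amplitude `A_{s,p} = p·M^p/√(2π·s·(s-1))`. -/
noncomputable def Aconst (s p : ℕ) : ℝ :=
  (p : ℝ) * Mconst s ^ p / Real.sqrt (2 * Real.pi * (s : ℝ) * ((s : ℝ) - 1))

open Stirling Real Filter Topology Nat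

lemma sq_ge (n : ℕ) (hn : 1 ≤ n) : Real.sqrt Real.pi ≤ stirlingSeq n := by
  obtain ⟨k, rfl⟩ := Nat.exists_eq_add_of_le hn
  have h := stirlingSeq'_antitone.le_of_tendsto
    (tendsto_stirlingSeq_sqrt_pi.comp (tendsto_atTop_mono (fun n => Nat.le_succ n) tendsto_id)) k
  simpa [Function.comp, Nat.succ_eq_add_one, Nat.add_comm] using h

lemma tele (n : ℕ) (hn : 1 ≤ n) : ∀ m : ℕ, Real.log (stirlingSeq (n+1)) - Real.log (stirlingSeq (n+1+m)) ≤ (1/4) * ((1/n : ℝ) - 1/(n+m)) := by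
  intro m
  induction m with
  | zero => simp
  | succ m ih =>
      have h2 := log_stirlingSeq_sub_log_stirlingSeq_succ (n+m+1)
      have hnm : (1:ℝ) ≤ (n:ℝ) + m := by
        have h1 : (1:ℝ) ≤ (n:ℝ) := by exact_mod_cast hn
        have h0 : (0:ℝ) ≤ (m:ℝ) := Nat.cast_nonneg m
        linarith
      have hx0 : (0:ℝ) < (n:ℝ) + m := by linarith
      have key : 1 / (4 * (↑(n+m+1) : ℝ)^2) ≤ (1/4) * ((1/((n:ℝ)+m)) - 1/((n:ℝ)+(m+1))) := by
        push_cast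
        have hd : (1:ℝ)/((n:ℝ)+m) - 1/((n:ℝ)+(m+1)) = 1/(((n:ℝ)+m)*(((n:ℝ)+m)+1)) := by
          rw [div_sub_div _ _ (ne_of_gt hx0) (by positivity)]
          congr 1 <;> ring
        rw [hd, show (1:ℝ)/4 * (1/(((n:ℝ)+m)*(((n:ℝ)+m)+1))) = 1/(4*(((n:ℝ)+m)*(((n:ℝ)+m)+1))) by rw [_root_.div_mul_div_comm, one_mul]]
        apply one_div_le_one_div_of_le (by positivity)
        nlinarith
      have e1 : n + 1 + (m+1) = (n+m+1) + 1 := by omega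
      have e2 : n + 1 + m = (n + m) + 1 := by omega
      have e3 : (n+m+1) + 1 = n+m+2 := by omega
      rw [e1, e3]
      rw [e2] at ih
      have h2' : Real.log (stirlingSeq (n+m+1)) - Real.log (stirlingSeq (n+m+2)) ≤ (1/4) * ((1/((n:ℝ)+m)) - 1/((n:ℝ)+(m+1))) := le_trans h2 key
      push_cast at ih h2' ⊢
      linarith

lemma log_sigma_le (n : ℕ) (hn : 1 ≤ n) :
    Real.log (stirlingSeq (n+1)) ≤ Real.log (Real.sqrt Real.pi) + 1/(4*n) := by
  have hπ : Real.sqrt Real.pi ≠ 0 := ne_of_gt (Real.sqrt_pos.mpr Real.pi_pos)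
  have hlim : Tendsto (fun m : ℕ => Real.log (stirlingSeq (n+1+m))) atTop (𝓝 (Real.log (Real.sqrt Real.pi))) := by
    have h1 : Tendsto (fun m : ℕ => stirlingSeq (n+1+m)) atTop (𝓝 (Real.sqrt Real.pi)) :=
      tendsto_stirlingSeq_sqrt_pi.comp (tendsto_atTop_mono (fun m => Nat.le_add_left m (n+1)) tendsto_id)
    exact ((Real.continuousAt_log hπ).tendsto).comp h1
  have hb : ∀ m : ℕ, Real.log (stirlingSeq (n+1)) - 1/(4*n) ≤ Real.log (stirlingSeq (n+1+m)) := by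
    intro m
    have h := tele n hn m
    have hn' : (1:ℝ) ≤ (n:ℝ) := by exact_mod_cast hn
    have hx : (0:ℝ) ≤ 1/((n:ℝ)+m) := by positivity
    have h14 : (1/4 : ℝ) * (1/(n:ℝ)) = 1/(4*n) := by ring
    nlinarith
  have := ge_of_tendsto hlim (Filter.Eventually.of_forall hb)
  linarith

lemma sigma_le (n : ℕ) (hn : 2 ≤ n) :
    stirlingSeq n ≤ Real.sqrt Real.pi * Real.exp (1/(2*n)) := by
  obtain ⟨k, rfl⟩ : ∃ k, n = (k+1)+1 := ⟨n - 2, by omega⟩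
  have h1 := log_sigma_le (k+1) (by omega)
  have hσpos : 0 < stirlingSeq (k+1+1) := stirlingSeq'_pos (k+1)
  have h2 : (1:ℝ)/(4*((k:ℝ)+1)) ≤ 1/(2*(((k:ℝ)+1)+1)) := by
    apply one_div_le_one_div_of_le (by positivity)
    nlinarith [Nat.cast_nonneg (α := ℝ) k]
  have h3 : Real.log (stirlingSeq (k+1+1)) ≤ Real.log (Real.sqrt Real.pi) + 1/(2*(((k:ℝ)+1)+1)) := by
    push_cast at h1 ⊢; linarith
  calc stirlingSeq (k+1+1) = Real.exp (Real.log (stirlingSeq (k+1+1))) := (Real.exp_log hσpos).symm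
    _ ≤ Real.exp (Real.log (Real.sqrt Real.pi) + 1/(2*(((k:ℝ)+1)+1))) := Real.exp_le_exp.mpr h3
    _ = Real.sqrt Real.pi * Real.exp (1/(2*(((k:ℝ)+1)+1))) := by
        rw [Real.exp_add, Real.exp_log (Real.sqrt_pos.mpr Real.pi_pos)]
    _ = Real.sqrt Real.pi * Real.exp (1/(2*((k:ℕ)+1+1 : ℕ):ℝ)) := by push_cast; ring_nf

lemma sigma_pos (n : ℕ) (hn : 1 ≤ n) : 0 < stirlingSeq n := by
  obtain ⟨j, rfl⟩ := Nat.exists_eq_add_of_le hn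
  simpa [Nat.add_comm] using stirlingSeq'_pos j

lemma fact_eq (n : ℕ) (hn : 1 ≤ n) :
    (n ! : ℝ) = stirlingSeq n * Real.sqrt (2*n) * ((n:ℝ)/Real.exp 1)^n := by
  have hn' : (0:ℝ) < (n:ℝ) := by exact_mod_cast hn
  have h1 : Real.sqrt (2*(n:ℝ)) ≠ 0 := ne_of_gt (Real.sqrt_pos.mpr (by linarith))
  have h2 : ((n:ℝ)/Real.exp 1)^n ≠ 0 :=
    pow_ne_zero _ (div_ne_zero (ne_of_gt hn') (Real.exp_ne_zero 1))
  rw [stirlingSeq]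
  field_simp

lemma eq_of_nonneg_sq {a b : ℝ} (ha : 0 ≤ a) (hb : 0 ≤ b) (h : a^2 = b^2) : a = b := by
  have := congrArg Real.sqrt h
  rwa [Real.sqrt_sq ha, Real.sqrt_sq hb] at this

set_option maxHeartbeats 1000000 in
lemma key (s p m : ℕ) (hs : 2 ≤ s) (hp : 1 ≤ p) (hm : 1 ≤ m) :
    raney s p m * zetaC s ^ m * (m : ℝ) ^ ((3:ℝ)/2)
    = Aconst s p *
      (Real.sqrt Real.pi * stirlingSeq (s*m+p) / (stirlingSeq m * stirlingSeq ((s-1)*m+p)) *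
       ((1 + (p:ℝ)/((s:ℝ)*m))^(s*m+p) / (1 + (p:ℝ)/(((s:ℝ)-1)*m))^((s-1)*m+p)) *
       (1 / Real.sqrt ((1 + (p:ℝ)/((s:ℝ)*m)) * (1 + (p:ℝ)/(((s:ℝ)-1)*m))))) := by
  obtain ⟨k, rfl⟩ : ∃ k, s = k + 1 := ⟨s - 1, by omega⟩
  have hk : 1 ≤ k := by omega
  simp only [Nat.add_sub_cancel]
  have hx : (0:ℝ) < (m:ℝ) := by exact_mod_cast hm
  have hk' : (1:ℝ) ≤ (k:ℝ) := by exact_mod_cast hk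
  have hp' : (1:ℝ) ≤ (p:ℝ) := by exact_mod_cast hp
  have hkx : (0:ℝ) < (k:ℝ) := by linarith
  have hma : m ≤ (k+1)*m + p :=
    le_trans (Nat.le_mul_of_pos_left m (by omega)) (Nat.le_add_right _ _)
  have hsub : (k+1)*m + p - m = k*m + p := by
    have h : (k+1)*m = k*m + m := by ring
    omega
  have ha1 : 1 ≤ (k+1)*m+p := by omega
  have hb1 : 1 ≤ k*m+p := by omega
  have hca : (((k+1)*m + p : ℕ):ℝ) = ((k:ℝ)+1)*(m:ℝ) + p := by push_cast; ring
  have hcb : ((k*m+p : ℕ):ℝ) = (k:ℝ)*(m:ℝ) + p := by push_cast; ring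
  have hcast1 : ((k+1:ℕ):ℝ) = (k:ℝ)+1 := by push_cast; ring
  -- normalize the casts in the goal
  simp only [hcast1, add_sub_cancel_right]
  obtain ⟨u, hu0, hu_def⟩ : ∃ u : ℝ, 0 < u ∧ (p:ℝ)/(((k:ℝ)+1)*(m:ℝ)) = u :=
    ⟨_, by positivity, rfl⟩
  obtain ⟨v, hv0, hv_def⟩ : ∃ v : ℝ, 0 < v ∧ (p:ℝ)/((k:ℝ)*(m:ℝ)) = v :=
    ⟨_, by positivity, rfl⟩
  rw [hu_def, hv_def]
  have h1u : (0:ℝ) < 1 + u := by linarith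
  have h1v : (0:ℝ) < 1 + v := by linarith
  have ha_eq : (((k+1)*m + p : ℕ):ℝ) = (((k:ℝ)+1)*(m:ℝ)) * (1 + u) := by
    rw [hca, ← hu_def]; field_simp
  have hb_eq : ((k*m+p : ℕ):ℝ) = ((k:ℝ)*(m:ℝ)) * (1 + v) := by
    rw [hcb, ← hv_def]; field_simp
  have ha0 : (0:ℝ) < (((k+1)*m + p : ℕ):ℝ) := by rw [hca]; positivity
  have hb0 : (0:ℝ) < ((k*m+p : ℕ):ℝ) := by rw [hcb]; positivity
  have hexpand : raney (k+1) p m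
      = (p:ℝ)/((((k+1)*m+p : ℕ)):ℝ) * ((((k+1)*m+p)! : ℝ)) / ((m ! : ℝ)) / (((k*m+p)! : ℝ)) := by
    rw [raney, Nat.cast_choose ℝ hma, hsub,
      show ((k+1:ℕ):ℝ)*(m:ℝ)+(p:ℝ) = (((k+1)*m+p : ℕ):ℝ) by push_cast; ring]
    ring
  -- abbreviations
  set A := ((k+1)*m+p : ℕ) with hA
  set B := (k*m+p : ℕ) with hB
  have hσa := sigma_pos A ha1
  have hσm := sigma_pos m hm
  have hσb := sigma_pos B hb1
  have hsa : (0:ℝ) < Real.sqrt (2*(A:ℝ)) := Real.sqrt_pos.mpr (by linarith)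
  have hsm : (0:ℝ) < Real.sqrt (2*(m:ℝ)) := Real.sqrt_pos.mpr (by linarith)
  have hsb : (0:ℝ) < Real.sqrt (2*(B:ℝ)) := Real.sqrt_pos.mpr (by linarith)
  have hPa : (0:ℝ) < ((A:ℝ)/Real.exp 1)^A := pow_pos (div_pos ha0 (Real.exp_pos 1)) _
  have hPm : (0:ℝ) < ((m:ℝ)/Real.exp 1)^m := pow_pos (div_pos hx (Real.exp_pos 1)) _
  have hPb : (0:ℝ) < ((B:ℝ)/Real.exp 1)^B := pow_pos (div_pos hb0 (Real.exp_pos 1)) _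
  have h1uA : (0:ℝ) < (1+u)^A := pow_pos h1u _
  have h1vB : (0:ℝ) < (1+v)^B := pow_pos h1v _
  have hsuv : (0:ℝ) < Real.sqrt ((1+u)*(1+v)) := Real.sqrt_pos.mpr (by positivity)
  -- power identity
  have hN : ((A:ℝ)/Real.exp 1)^A * zetaC (k+1) ^ m
      = ((m:ℝ)/Real.exp 1)^m * ((B:ℝ)/Real.exp 1)^B * Mconst (k+1) ^ p
        * ((1+u)^A/(1+v)^B) := by
    rw [ha_eq, hb_eq]
    simp only [zetaC, Mconst, hcast1, add_sub_cancel_right, Nat.add_sub_cancel, hA, hB]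
    obtain ⟨E, hE0, hE⟩ : ∃ E : ℝ, 0 < E ∧ Real.exp 1 = E := ⟨_, Real.exp_pos 1, rfl⟩
    rw [hE]
    have he : E ≠ 0 := ne_of_gt hE0
    simp only [div_pow, mul_pow, ← pow_mul]
    field_simp
    ring
  -- sqrt identity
  have hT : (p:ℝ)/(A:ℝ) * Real.sqrt (2*(A:ℝ)) * (m:ℝ)^((3:ℝ)/2) / (Real.sqrt (2*(m:ℝ)) * Real.sqrt (2*(B:ℝ)))
      = (p:ℝ)/Real.sqrt (2*Real.pi*((k:ℝ)+1)*(k:ℝ)) * Real.sqrt Real.pi * (1/Real.sqrt ((1+u)*(1+v))) := by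
    apply eq_of_nonneg_sq (by positivity) (by positivity)
    have hx3 : ((m:ℝ)^((3:ℝ)/2))^2 = (m:ℝ)^(3:ℕ) := by
      rw [← Real.rpow_natCast ((m:ℝ)^((3:ℝ)/2)) 2, ← Real.rpow_mul hx.le]
      norm_num
    have hπ : (0:ℝ) < 2*Real.pi*((k:ℝ)+1)*(k:ℝ) := by positivity
    simp only [mul_pow, div_pow, one_pow, hx3, Real.sq_sqrt (le_of_lt hπ),
      Real.sq_sqrt (by linarith : (0:ℝ) ≤ 2*(A:ℝ)), Real.sq_sqrt (by linarith : (0:ℝ) ≤ 2*(m:ℝ)),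
      Real.sq_sqrt (by linarith : (0:ℝ) ≤ 2*(B:ℝ)), Real.sq_sqrt Real.pi_pos.le,
      Real.sq_sqrt (by positivity : (0:ℝ) ≤ (1+u)*(1+v))]
    rw [ha_eq, hb_eq]
    field_simp
  -- assemble
  rw [hexpand, fact_eq A ha1, fact_eq m hm, fact_eq B hb1]
  set_option maxHeartbeats 1000000 in
  have hMp : (0:ℝ) < Mconst (k+1) ^ p := by
    apply pow_pos
    rw [Mconst, hcast1]
    have : (0:ℝ) < (k:ℝ)+1-1 := by simpa using hkx
    positivity
  calc (p:ℝ)/(A:ℝ) * (stirlingSeq A * Real.sqrt (2*(A:ℝ)) * ((A:ℝ)/Real.exp 1)^A)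
        / (stirlingSeq m * Real.sqrt (2*(m:ℝ)) * ((m:ℝ)/Real.exp 1)^m)
        / (stirlingSeq B * Real.sqrt (2*(B:ℝ)) * ((B:ℝ)/Real.exp 1)^B)
        * zetaC (k+1) ^ m * (m:ℝ)^((3:ℝ)/2)
      = ((p:ℝ)/(A:ℝ) * Real.sqrt (2*(A:ℝ)) * (m:ℝ)^((3:ℝ)/2) / (Real.sqrt (2*(m:ℝ)) * Real.sqrt (2*(B:ℝ))))
        * (stirlingSeq A / (stirlingSeq m * stirlingSeq B))
        * ((((A:ℝ)/Real.exp 1)^A * zetaC (k+1) ^ m) / (((m:ℝ)/Real.exp 1)^m * ((B:ℝ)/Real.exp 1)^B)) := by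
        field_simp
    _ = ((p:ℝ)/(A:ℝ) * Real.sqrt (2*(A:ℝ)) * (m:ℝ)^((3:ℝ)/2) / (Real.sqrt (2*(m:ℝ)) * Real.sqrt (2*(B:ℝ))))
        * (stirlingSeq A / (stirlingSeq m * stirlingSeq B))
        * (Mconst (k+1) ^ p * ((1+u)^A/(1+v)^B)) := by
        rw [hN]
        field_simp
    _ = (((p:ℝ)/(A:ℝ) * Real.sqrt (2*(A:ℝ)) * (m:ℝ)^((3:ℝ)/2) / (Real.sqrt (2*(m:ℝ)) * Real.sqrt (2*(B:ℝ)))) * Mconst (k+1) ^ p)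
        * (stirlingSeq A / (stirlingSeq m * stirlingSeq B))
        * ((1+u)^A/(1+v)^B) := by ring
    _ = (((p:ℝ)/Real.sqrt (2*Real.pi*((k:ℝ)+1)*(k:ℝ)) * Real.sqrt Real.pi * (1/Real.sqrt ((1+u)*(1+v)))) * Mconst (k+1) ^ p)
        * (stirlingSeq A / (stirlingSeq m * stirlingSeq B))
        * ((1+u)^A/(1+v)^B) := by rw [hT]
    _ = Aconst (k+1) p *
        (Real.sqrt Real.pi * stirlingSeq A / (stirlingSeq m * stirlingSeq B) *
         ((1+u)^A / (1+v)^B) * (1 / Real.sqrt ((1+u)*(1+v)))) := by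
        simp only [Aconst, hcast1, add_sub_cancel_right]
        ring

lemma log_lb (t : ℝ) (ht : 0 < t) : t - t^2 ≤ Real.log (1+t) := by
  have h1t : (0:ℝ) < 1 + t := by linarith
  have h := Real.one_sub_inv_le_log_of_pos h1t
  have hinv : (1+t) * (1+t)⁻¹ = 1 := mul_inv_cancel₀ (ne_of_gt h1t)
  nlinarith [h, hinv, sq_nonneg t, mul_pos ht ht, mul_pos (mul_pos ht ht) ht]

lemma log_ub (t : ℝ) (ht : 0 < t) : Real.log (1+t) ≤ t := by
  have h := Real.log_le_sub_one_of_pos (show (0:ℝ) < 1+t by linarith)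
  linarith


set_option maxHeartbeats 1000000 in
lemma ratio_bound (s p m : ℕ) (hs : 2 ≤ s) (hp : 1 ≤ p) (hm : 3*p^2+p+1 ≤ m) :
    |Real.sqrt Real.pi * stirlingSeq (s*m+p) / (stirlingSeq m * stirlingSeq ((s-1)*m+p)) *
       ((1 + (p:ℝ)/((s:ℝ)*m))^(s*m+p) / (1 + (p:ℝ)/(((s:ℝ)-1)*m))^((s-1)*m+p)) *
       (1 / Real.sqrt ((1 + (p:ℝ)/((s:ℝ)*m)) * (1 + (p:ℝ)/(((s:ℝ)-1)*m)))) - 1|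
      ≤ 2*(3*(p:ℝ)^2+(p:ℝ)+1)/m := by
  have hm2 : 2 ≤ m := by
    have h1 : 1 ≤ p^2 := Nat.one_le_pow 2 p (by omega)
    linarith
  have hm1 : 1 ≤ m := by omega
  have hx : (0:ℝ) < (m:ℝ) := by exact_mod_cast hm1
  have hp' : (1:ℝ) ≤ (p:ℝ) := by exact_mod_cast hp
  have hs' : (2:ℝ) ≤ (s:ℝ) := by exact_mod_cast hs
  have hs1 : (1:ℝ) ≤ (s:ℝ) - 1 := by linarith
  have hpm : (p:ℝ) ≤ (m:ℝ) := by
    have h1 : 1 ≤ p^2 := Nat.one_le_pow 2 p (by omega)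
    have : p ≤ m := by linarith
    exact_mod_cast this
  -- abbreviations
  set x := (m:ℝ) with hxdef
  set u : ℝ := (p:ℝ)/((s:ℝ)*x) with hu_def
  set v : ℝ := (p:ℝ)/(((s:ℝ)-1)*x) with hv_def
  have hu0 : 0 < u := by rw [hu_def]; positivity
  have hv0 : 0 < v := by rw [hv_def]; positivity
  have h1u : (0:ℝ) < 1 + u := by linarith
  have h1v : (0:ℝ) < 1 + v := by linarith
  have hux : (s:ℝ)*x*u = p := by rw [hu_def]; field_simp
  have hvx : ((s:ℝ)-1)*x*v = p := by rw [hv_def]; field_simp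
  have huv : u ≤ v := by
    rw [hu_def, hv_def]
    apply div_le_div_of_nonneg_left (by linarith)
      (mul_pos (by linarith : (0:ℝ) < (s:ℝ)-1) hx) (by rw [mul_comm ((s:ℝ)-1) x, mul_comm (s:ℝ) x]; exact mul_le_mul_of_nonneg_left (by linarith) hx.le)
  have hvp : v*x ≤ (p:ℝ) := by
    rw [hv_def]
    rw [div_mul_eq_mul_div, div_le_iff₀ (mul_pos (by linarith : (0:ℝ) < (s:ℝ)-1) hx)]
    have h1 : 1*x ≤ ((s:ℝ)-1)*x := mul_le_mul_of_nonneg_right hs1 hx.le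
    have h2 : (p:ℝ)*(1*x) ≤ (p:ℝ)*(((s:ℝ)-1)*x) :=
      mul_le_mul_of_nonneg_left h1 (by linarith : (0:ℝ) ≤ (p:ℝ))
    linarith
  have hv1 : v ≤ 1 := by
    rw [hv_def, div_le_one (mul_pos (by linarith : (0:ℝ) < (s:ℝ)-1) hx)]
    have h1 : 1*x ≤ ((s:ℝ)-1)*x := mul_le_mul_of_nonneg_right hs1 hx.le
    linarith
  have hu1 : u ≤ 1 := le_trans huv hv1
  have hup : u*x ≤ (p:ℝ) := by
    have h0 : (0:ℝ) ≤ u*x := mul_nonneg hu0.le hx.le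
    have h1 : (u*x)*2 ≤ (u*x)*(s:ℝ) := mul_le_mul_of_nonneg_left hs' h0
    have h2 : (u*x)*(s:ℝ) = (p:ℝ) := by linear_combination hux
    linarith
  -- naturals a b
  have ha1 : 1 ≤ s*m+p := by omega
  have hb1 : 1 ≤ (s-1)*m+p := by omega
  have h2sm : 2*1 ≤ s*m := Nat.mul_le_mul hs hm1
  have h1s : 1 ≤ s - 1 := by omega
  have h1bm : 1*m ≤ (s-1)*m := Nat.mul_le_mul_right m h1s
  have h1sm : 1*m ≤ s*m := Nat.mul_le_mul_right m (by omega : 1 ≤ s)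
  have ha2 : 2 ≤ s*m+p := by linarith
  have hb2 : 2 ≤ (s-1)*m+p := by linarith
  have hma : m ≤ s*m+p := by linarith
  have hmb : m ≤ (s-1)*m+p := by linarith
  have hca : ((s*m+p : ℕ):ℝ) = (s:ℝ)*x + p := by push_cast; ring
  have hcb : (((s-1)*m+p : ℕ):ℝ) = ((s:ℝ)-1)*x + p := by
    push_cast [Nat.cast_sub (show 1 ≤ s by omega)]; ring
  have hma' : x ≤ ((s*m+p : ℕ):ℝ) := by rw [hxdef]; exact_mod_cast hma
  have hmb' : x ≤ (((s-1)*m+p : ℕ):ℝ) := by rw [hxdef]; exact_mod_cast hmb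
  have hsx : (0:ℝ) < (s:ℝ)*x := mul_pos (by linarith) hx
  have hsx1 : (0:ℝ) < ((s:ℝ)-1)*x := mul_pos (by linarith) hx
  have ha0 : (0:ℝ) < ((s*m+p : ℕ):ℝ) := by rw [hca]; linarith
  have hb0 : (0:ℝ) < (((s-1)*m+p : ℕ):ℝ) := by rw [hcb]; linarith
  have hσa := sigma_pos _ ha1
  have hσm := sigma_pos _ hm1
  have hσb := sigma_pos _ hb1
  have hπ : (0:ℝ) < Real.sqrt Real.pi := Real.sqrt_pos.mpr Real.pi_pos
  -- X bounds
  set X : ℝ := Real.sqrt Real.pi * stirlingSeq (s*m+p) / (stirlingSeq m * stirlingSeq ((s-1)*m+p)) with hX_def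
  have hXpos : 0 < X := by rw [hX_def]; positivity
  have hXu : X ≤ Real.exp (1/x) := by
    have h1 : X ≤ Real.sqrt Real.pi * (Real.sqrt Real.pi * Real.exp (1/(2*((s*m+p:ℕ):ℝ)))) / (Real.sqrt Real.pi * Real.sqrt Real.pi) := by
      rw [hX_def]
      gcongr
      · exact sigma_le _ ha2
      · exact sq_ge _ hm1
      · exact sq_ge _ hb1
    have h2 : Real.sqrt Real.pi * (Real.sqrt Real.pi * Real.exp (1/(2*((s*m+p:ℕ):ℝ)))) / (Real.sqrt Real.pi * Real.sqrt Real.pi) = Real.exp (1/(2*((s*m+p:ℕ):ℝ))) := by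
      field_simp
    have h3 : Real.exp (1/(2*((s*m+p:ℕ):ℝ))) ≤ Real.exp (1/x) := by
      apply Real.exp_le_exp.mpr
      apply div_le_div_of_nonneg_left one_pos.le hx
      linarith [hma', ha0]
    calc X ≤ _ := h1
      _ = _ := h2
      _ ≤ _ := h3
  have hXl : Real.exp (-(1/x)) ≤ X := by
    have h1 : Real.sqrt Real.pi * Real.sqrt Real.pi / ((Real.sqrt Real.pi * Real.exp (1/(2*x))) * (Real.sqrt Real.pi * Real.exp (1/(2*x)))) ≤ X := by
      rw [hX_def]
      gcongr
      · exact sq_ge _ ha1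
      · exact sigma_le _ hm2
      · calc stirlingSeq ((s-1)*m+p) ≤ Real.sqrt Real.pi * Real.exp (1/(2*(((s-1)*m+p:ℕ):ℝ))) := sigma_le _ hb2
          _ ≤ Real.sqrt Real.pi * Real.exp (1/(2*x)) := by gcongr
    have he2 : Real.exp (1/(2*x)) * Real.exp (1/(2*x)) = Real.exp (1/x) := by
      rw [← Real.exp_add]
      congr 1
      field_simp
      norm_num
    have h2 : Real.sqrt Real.pi * Real.sqrt Real.pi / ((Real.sqrt Real.pi * Real.exp (1/(2*x))) * (Real.sqrt Real.pi * Real.exp (1/(2*x)))) = Real.exp (-(1/x)) := by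
      rw [Real.exp_neg, inv_eq_one_div, div_eq_div_iff (by positivity) (by positivity), ← he2]
      ring
    exact h2 ▸ h1
  -- Y bounds
  set Y : ℝ := (1 + u)^(s*m+p) / (1 + v)^((s-1)*m+p) with hY_def
  have hYpos : 0 < Y := div_pos (pow_pos h1u _) (pow_pos h1v _)
  have hp0 : (0:ℝ) ≤ (p:ℝ) := by positivity
  have hlogY : Real.log Y = ((s*m+p : ℕ):ℝ) * Real.log (1+u) - (((s-1)*m+p : ℕ):ℝ) * Real.log (1+v) := by
    rw [hY_def, Real.log_div (ne_of_gt (pow_pos h1u _)) (ne_of_gt (pow_pos h1v _)),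
      Real.log_pow, Real.log_pow]
  have lu1 : Real.log (1+u) ≤ u := log_ub u hu0
  have lu2 : u - u^2 ≤ Real.log (1+u) := log_lb u hu0
  have lv1 : Real.log (1+v) ≤ v := log_ub v hv0
  have lv2 : v - v^2 ≤ Real.log (1+v) := log_lb v hv0
  have hYub : Real.log Y ≤ 3*(p:ℝ)^2/x := by
    have h1 : Real.log Y ≤ ((s:ℝ)*x+p)*u - (((s:ℝ)-1)*x+p)*(v - v^2) := by
      rw [hlogY, hca, hcb]
      have c1 : ((s:ℝ)*x+p) * Real.log (1+u) ≤ ((s:ℝ)*x+p)*u :=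
        mul_le_mul_of_nonneg_left lu1 (by linarith)
      have c2 : (((s:ℝ)-1)*x+p)*(v - v^2) ≤ (((s:ℝ)-1)*x+p) * Real.log (1+v) :=
        mul_le_mul_of_nonneg_left lv2 (by linarith)
      linarith
    have e1 : ((s:ℝ)*x+p)*u - (((s:ℝ)-1)*x+p)*(v - v^2) = (p:ℝ)*(u-v) + p*v + p*v^2 := by
      linear_combination hux + (v - 1)*hvx
    have t1 : (p:ℝ)*(u-v)*x ≤ 0 :=
      mul_nonpos_of_nonpos_of_nonneg (mul_nonpos_of_nonneg_of_nonpos hp0 (by linarith)) hx.le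
    have t2 : (p:ℝ)*v*x ≤ p*p := by
      calc (p:ℝ)*v*x = (p:ℝ)*(v*x) := by ring
        _ ≤ (p:ℝ)*(p:ℝ) := mul_le_mul_of_nonneg_left hvp hp0
    have t3 : (p:ℝ)*v^2*x ≤ p*p := by
      have h1 : (p:ℝ)*v ≤ (p:ℝ)*1 := mul_le_mul_of_nonneg_left hv1 hp0
      have h2 : (0:ℝ) ≤ v*x := mul_nonneg hv0.le hx.le
      calc (p:ℝ)*v^2*x = ((p:ℝ)*v)*(v*x) := by ring
        _ ≤ (p:ℝ)*(p:ℝ) := mul_le_mul (by linarith) hvp h2 hp0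
    rw [le_div_iff₀ hx]
    have hpp : (p:ℝ)*(p:ℝ) = (p:ℝ)^2 := by ring
    have hpsq : (0:ℝ) ≤ (p:ℝ)^2 := sq_nonneg _
    have h4 : Real.log Y ≤ (p:ℝ)*(u-v) + (p:ℝ)*v + (p:ℝ)*v^2 := by
      rw [e1] at h1
      linarith
    calc Real.log Y * x ≤ ((p:ℝ)*(u-v) + (p:ℝ)*v + (p:ℝ)*v^2) * x :=
          mul_le_mul_of_nonneg_right h4 hx.le
      _ = (p:ℝ)*(u-v)*x + (p:ℝ)*v*x + (p:ℝ)*v^2*x := by ring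
      _ ≤ 0 + (p:ℝ)*(p:ℝ) + (p:ℝ)*(p:ℝ) := by linarith
      _ ≤ 3*(p:ℝ)^2 := by linarith
  have hYlb : -(3*(p:ℝ)^2/x) ≤ Real.log Y := by
    have h1 : ((s:ℝ)*x+p)*(u - u^2) - (((s:ℝ)-1)*x+p)*v ≤ Real.log Y := by
      rw [hlogY, hca, hcb]
      have c1 : ((s:ℝ)*x+p)*(u - u^2) ≤ ((s:ℝ)*x+p) * Real.log (1+u) :=
        mul_le_mul_of_nonneg_left lu2 (by linarith)
      have c2 : (((s:ℝ)-1)*x+p) * Real.log (1+v) ≤ (((s:ℝ)-1)*x+p)*v :=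
        mul_le_mul_of_nonneg_left lv1 (by linarith)
      linarith
    have e1 : ((s:ℝ)*x+p)*(u - u^2) - (((s:ℝ)-1)*x+p)*v = -((p:ℝ)*u^2) - p*v := by
      linear_combination (1-u)*hux - hvx
    have t4 : (p:ℝ)*u^2*x ≤ p*p := by
      have h1 : (p:ℝ)*u ≤ (p:ℝ)*1 := mul_le_mul_of_nonneg_left hu1 hp0
      have h2 : (0:ℝ) ≤ u*x := mul_nonneg hu0.le hx.le
      calc (p:ℝ)*u^2*x = ((p:ℝ)*u)*(u*x) := by ring
        _ ≤ (p:ℝ)*(p:ℝ) := mul_le_mul (by linarith) hup h2 hp0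
    have t5 : (p:ℝ)*v*x ≤ p*p := by
      calc (p:ℝ)*v*x = (p:ℝ)*(v*x) := by ring
        _ ≤ (p:ℝ)*(p:ℝ) := mul_le_mul_of_nonneg_left hvp hp0
    have h2 : -(3*(p:ℝ)^2/x) ≤ -((p:ℝ)*u^2) - p*v := by
      have hpp : (p:ℝ)*(p:ℝ) = (p:ℝ)^2 := by ring
      have hpsq : (0:ℝ) ≤ (p:ℝ)^2 := sq_nonneg _
      have h3 : (p:ℝ)*u^2 + p*v ≤ 3*(p:ℝ)^2/x := by
        rw [le_div_iff₀ hx]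
        calc ((p:ℝ)*u^2 + (p:ℝ)*v) * x = (p:ℝ)*u^2*x + (p:ℝ)*v*x := by ring
          _ ≤ (p:ℝ)*(p:ℝ) + (p:ℝ)*(p:ℝ) := by linarith
          _ ≤ 3*(p:ℝ)^2 := by linarith
      linarith
    rw [e1] at h1
    linarith
  have hYu : Y ≤ Real.exp (3*(p:ℝ)^2/x) := by
    rw [← Real.exp_log hYpos]; exact Real.exp_le_exp.mpr hYub
  have hYl : Real.exp (-(3*(p:ℝ)^2/x)) ≤ Y := by
    rw [← Real.exp_log hYpos]; exact Real.exp_le_exp.mpr hYlb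
  -- Z bounds
  set Z : ℝ := 1 / Real.sqrt ((1+u)*(1+v)) with hZ_def
  have hW0 : (0:ℝ) < Real.sqrt ((1+u)*(1+v)) := Real.sqrt_pos.mpr (by positivity)
  have hZpos : 0 < Z := by rw [hZ_def]; positivity
  have hW1 : 1 ≤ Real.sqrt ((1+u)*(1+v)) := by
    have h5 : Real.sqrt 1 ≤ Real.sqrt ((1+u)*(1+v)) := by
      refine Real.sqrt_le_sqrt ?_
      rw [show (1+u)*(1+v) = 1 + (u + v + u*v) from by ring]
      have huv0 : (0:ℝ) ≤ u*v := mul_nonneg hu0.le hv0.le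
      linarith
    rwa [Real.sqrt_one] at h5
  have hupx : u ≤ (p:ℝ)/x := by rw [le_div_iff₀ hx]; linarith
  have hvpx : v ≤ (p:ℝ)/x := by rw [le_div_iff₀ hx]; linarith
  have hWu : Real.sqrt ((1+u)*(1+v)) ≤ Real.exp ((p:ℝ)/x) := by
    have h1 : (1+u)*(1+v) ≤ Real.exp ((p:ℝ)/x) * Real.exp ((p:ℝ)/x) := by
      have a1 : 1+u ≤ Real.exp ((p:ℝ)/x) :=
        le_trans (by linarith [Real.add_one_le_exp u]) (Real.exp_le_exp.mpr hupx)
      have a2 : 1+v ≤ Real.exp ((p:ℝ)/x) :=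
        le_trans (by linarith [Real.add_one_le_exp v]) (Real.exp_le_exp.mpr hvpx)
      exact mul_le_mul a1 a2 (by linarith) (Real.exp_pos _).le
    calc Real.sqrt ((1+u)*(1+v)) ≤ Real.sqrt (Real.exp ((p:ℝ)/x) * Real.exp ((p:ℝ)/x)) :=
          Real.sqrt_le_sqrt h1
      _ = Real.exp ((p:ℝ)/x) := Real.sqrt_mul_self (Real.exp_pos _).le
  have hZu : Z ≤ 1 := by rw [hZ_def, div_le_one hW0]; exact hW1
  have hZl : Real.exp (-((p:ℝ)/x)) ≤ Z := by
    rw [hZ_def, Real.exp_neg]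
    rw [inv_eq_one_div]
    exact one_div_le_one_div_of_le hW0 hWu
  -- combine
  set K : ℝ := 1 + 3*(p:ℝ)^2 + p with hK_def
  have hK0 : (0:ℝ) < K := by rw [hK_def]; positivity
  have hKx : K/x ≤ 1 := by
    rw [div_le_one hx, hK_def]
    have : (3*(p:ℝ)^2+p+1 : ℝ) ≤ x := by rw [hxdef]; exact_mod_cast hm
    linarith
  have hXYZu : X * Y * Z ≤ Real.exp (K/x) := by
    have h1 : X * Y ≤ Real.exp (1/x) * Real.exp (3*(p:ℝ)^2/x) :=
      mul_le_mul hXu hYu hYpos.le (Real.exp_pos _).le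
    have hZu' : Z ≤ Real.exp ((p:ℝ)/x) := le_trans hZu (Real.one_le_exp (by positivity))
    have h2 : X * Y * Z ≤ (Real.exp (1/x) * Real.exp (3*(p:ℝ)^2/x)) * Real.exp ((p:ℝ)/x) :=
      mul_le_mul h1 hZu' hZpos.le (by positivity)
    calc X*Y*Z ≤ _ := h2
      _ = Real.exp (K/x) := by
          rw [← Real.exp_add, ← Real.exp_add]
          congr 1
          rw [hK_def]
          ring
  have hXYZl : Real.exp (-(K/x)) ≤ X * Y * Z := by
    have h1 : Real.exp (-(1/x)) * Real.exp (-(3*(p:ℝ)^2/x)) ≤ X * Y :=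
      mul_le_mul hXl hYl (Real.exp_pos _).le hXpos.le
    have h2 : (Real.exp (-(1/x)) * Real.exp (-(3*(p:ℝ)^2/x))) * Real.exp (-((p:ℝ)/x)) ≤ X * Y * Z :=
      mul_le_mul h1 hZl (Real.exp_pos _).le (by positivity)
    calc Real.exp (-(K/x)) = (Real.exp (-(1/x)) * Real.exp (-(3*(p:ℝ)^2/x))) * Real.exp (-((p:ℝ)/x)) := by
          rw [← Real.exp_add, ← Real.exp_add]
          congr 1
          rw [hK_def]
          ring
      _ ≤ X*Y*Z := h2
  have hKx0 : (0:ℝ) ≤ K/x := div_nonneg hK0.le hx.le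
  have habs1 : |Real.exp (K/x) - 1| ≤ 2*(K/x) := by
    have := Real.abs_exp_sub_one_le (x := K/x) (by rw [abs_of_nonneg hKx0]; exact hKx)
    rwa [abs_of_nonneg hKx0] at this
  have habs2 : |Real.exp (-(K/x)) - 1| ≤ 2*(K/x) := by
    have := Real.abs_exp_sub_one_le (x := -(K/x)) (by rw [abs_neg, abs_of_nonneg hKx0]; exact hKx)
    rwa [abs_neg, abs_of_nonneg hKx0] at this
  have hgoal : |X * Y * Z - 1| ≤ 2*(K/x) := by
    rw [abs_le]
    constructor
    · have h3 : 1 - Real.exp (-(K/x)) ≤ |Real.exp (-(K/x)) - 1| := by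
        rw [abs_sub_comm]; exact le_abs_self _
      linarith
    · have h3 : Real.exp (K/x) - 1 ≤ |Real.exp (K/x) - 1| := le_abs_self _
      linarith
  calc |X * Y * Z - 1| ≤ 2*(K/x) := hgoal
    _ = 2*(3*(p:ℝ)^2+(p:ℝ)+1)/x := by rw [hK_def]; ring

theorem stmt4 (s p : ℕ) (hs : 2 ≤ s) (hp : 1 ≤ p) :
    ∃ C : ℝ, 0 < C ∧ ∀ m : ℕ, 1 ≤ m →
      |raney s p m * zetaC s ^ m * (m : ℝ) ^ ((3 : ℝ) / 2) - Aconst s p| ≤ C / m := by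
  have hs' : (2:ℝ) ≤ (s:ℝ) := by exact_mod_cast hs
  have hA : 0 < Aconst s p := by
    rw [Aconst]
    have hM : 0 < Mconst s := by
      rw [Mconst]
      apply _root_.div_pos (by linarith) (by linarith)
    have hp' : (1:ℝ) ≤ (p:ℝ) := by exact_mod_cast hp
    have h1 : (0:ℝ) < 2 * Real.pi * (s:ℝ) * ((s:ℝ)-1) := by
      have := Real.pi_pos
      apply mul_pos (mul_pos (mul_pos two_pos this) (by linarith)) (by linarith)
    positivity
  set m0 : ℕ := 3*p^2+p+1 with hm0_def
  set g : ℕ → ℝ := fun n =>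
    (n:ℝ) * |raney s p n * zetaC s ^ n * (n:ℝ)^((3:ℝ)/2) - Aconst s p| with hg_def
  have hne : (Finset.Icc 1 m0).Nonempty := ⟨1, by simp [Finset.mem_Icc]; omega⟩
  set C0 : ℝ := (Finset.Icc 1 m0).sup' hne g with hC0_def
  have hC00 : 0 ≤ C0 := by
    have h1 : g 1 ≤ C0 := Finset.le_sup' g (by simp [Finset.mem_Icc]; omega)
    have h2 : 0 ≤ g 1 := by rw [hg_def]; positivity
    linarith
  set K : ℝ := 3*(p:ℝ)^2+(p:ℝ)+1 with hK_def
  have hK0 : 0 < K := by rw [hK_def]; positivity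
  have hAK : (0:ℝ) ≤ 2*Aconst s p*K := by positivity
  refine ⟨2*Aconst s p*K + C0 + 1, by linarith, fun m hm => ?_⟩
  have hx : (0:ℝ) < (m:ℝ) := by exact_mod_cast hm
  by_cases hcase : m0 ≤ m
  · have hkey := key s p m hs hp hm
    have hr := ratio_bound s p m hs hp (by omega)
    set W : ℝ := Real.sqrt Real.pi * stirlingSeq (s*m+p) / (stirlingSeq m * stirlingSeq ((s-1)*m+p)) *
       ((1 + (p:ℝ)/((s:ℝ)*m))^(s*m+p) / (1 + (p:ℝ)/(((s:ℝ)-1)*m))^((s-1)*m+p)) *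
       (1 / Real.sqrt ((1 + (p:ℝ)/((s:ℝ)*m)) * (1 + (p:ℝ)/(((s:ℝ)-1)*m)))) with hW_def
    calc |raney s p m * zetaC s ^ m * (m:ℝ)^((3:ℝ)/2) - Aconst s p|
        = |Aconst s p * W - Aconst s p| := by rw [hkey]
      _ = Aconst s p * |W - 1| := by
          rw [show Aconst s p * W - Aconst s p = Aconst s p * (W - 1) by ring, abs_mul,
            abs_of_nonneg hA.le]
      _ ≤ Aconst s p * (2*K/m) := mul_le_mul_of_nonneg_left hr hA.le
      _ = (2*Aconst s p*K)/m := by ring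
      _ ≤ (2*Aconst s p*K + C0 + 1)/m := by
          gcongr
          linarith
  · have hmem : m ∈ Finset.Icc 1 m0 := by simp [Finset.mem_Icc]; omega
    have h1 : g m ≤ C0 := Finset.le_sup' g hmem
    rw [le_div_iff₀ hx]
    have h2 : g m = |raney s p m * zetaC s ^ m * (m:ℝ)^((3:ℝ)/2) - Aconst s p| * m := by
      rw [hg_def]; ring
    rw [← h2]
    linarith
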